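/- As formal power series over ℚ, the five series ∑_{n≥0}(3-21)S_n(2-3-1) z^n, ∑_{n≥0}(3-12)S_n(2-3-1) z^n, ∑_{n≥0}(32-1)S_n(2-3-1) z^n, ∑_{n≥0}(31-2)S_n(2-3-1) z^n, and ∑_{n≥0}(13-2)S_n(2-3-1) z^n are all equal to z^3 B(z)^2 C(z)^4; moreover ∑_{n≥0}(1-32)S_n(2-3-1) z^n = z^3 B(z)^3 C(z)^3. -/

import Mathlib

open Finset

/-- The set of 2-3-1-avoiding permutations of `{1,...,n}` (encoded via `Fin n`):
no indices `i < j < k` with `π k < π i < π j`. -/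
def avoid231 (n : ℕ) : Finset (Equiv.Perm (Fin n)) :=
  univ.filter fun π => ∀ i j k : Fin n, i < j → j < k → ¬(π k < π i ∧ π i < π j)

/-- `B(z) = ∑ binom(2n,n) zⁿ` as a formal power series over `ℚ`. -/
noncomputable def Bq : PowerSeries ℚ :=
  PowerSeries.mk fun n => (Nat.choose (2 * n) n : ℚ)

/-- `C(z) = ∑ Catalan(n) zⁿ` as a formal power series over `ℚ`. -/
noncomputable def Cq : PowerSeries ℚ :=
  PowerSeries.mk fun n => (catalan n : ℚ)

/-- Occurrences of 3-21 in `π`: triples `(i, j, j')` with `i < j`, `j' = j+1` and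
`π j' < π j < π i`. -/
def occ3d21 {n : ℕ} (π : Equiv.Perm (Fin n)) : ℕ :=
  (univ.filter fun t : Fin n × Fin n × Fin n =>
    t.1 < t.2.1 ∧ (t.2.2 : ℕ) = (t.2.1 : ℕ) + 1 ∧
    π t.2.2 < π t.2.1 ∧ π t.2.1 < π t.1).card

/-- Occurrences of 3-12 in `π`: triples `(i, j, j')` with `i < j`, `j' = j+1` and
`π j < π j' < π i`. -/
def occ3d12 {n : ℕ} (π : Equiv.Perm (Fin n)) : ℕ :=
  (univ.filter fun t : Fin n × Fin n × Fin n =>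
    t.1 < t.2.1 ∧ (t.2.2 : ℕ) = (t.2.1 : ℕ) + 1 ∧
    π t.2.1 < π t.2.2 ∧ π t.2.2 < π t.1).card

/-- Occurrences of 32-1 in `π`: triples `(i, i', j)` with `i' = i+1 < j` and
`π j < π i' < π i`. -/
def occ32d1 {n : ℕ} (π : Equiv.Perm (Fin n)) : ℕ :=
  (univ.filter fun t : Fin n × Fin n × Fin n =>
    (t.2.1 : ℕ) = (t.1 : ℕ) + 1 ∧ t.2.1 < t.2.2 ∧
    π t.2.2 < π t.2.1 ∧ π t.2.1 < π t.1).card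

/-- Occurrences of 31-2 in `π`: triples `(i, i', j)` with `i' = i+1 < j` and
`π i' < π j < π i`. -/
def occ31d2 {n : ℕ} (π : Equiv.Perm (Fin n)) : ℕ :=
  (univ.filter fun t : Fin n × Fin n × Fin n =>
    (t.2.1 : ℕ) = (t.1 : ℕ) + 1 ∧ t.2.1 < t.2.2 ∧
    π t.2.1 < π t.2.2 ∧ π t.2.2 < π t.1).card

/-- Occurrences of 13-2 in `π`: triples `(i, i', j)` with `i' = i+1 < j` and
`π i < π j < π i'`. -/
def occ13d2 {n : ℕ} (π : Equiv.Perm (Fin n)) : ℕ :=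
  (univ.filter fun t : Fin n × Fin n × Fin n =>
    (t.2.1 : ℕ) = (t.1 : ℕ) + 1 ∧ t.2.1 < t.2.2 ∧
    π t.1 < π t.2.2 ∧ π t.2.2 < π t.2.1).card

/-- Occurrences of 1-32 in `π`: triples `(i, j, j')` with `i < j`, `j' = j+1` and
`π i < π j' < π j`. -/
def occ1d32 {n : ℕ} (π : Equiv.Perm (Fin n)) : ℕ :=
  (univ.filter fun t : Fin n × Fin n × Fin n =>
    t.1 < t.2.1 ∧ (t.2.2 : ℕ) = (t.2.1 : ℕ) + 1 ∧
    π t.1 < π t.2.2 ∧ π t.2.2 < π t.2.1).card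

namespace Vinc
open Equiv
variable {n k : ℕ}
def emL (hk : k ≤ n) (i : Fin k) : Fin (n + 1) := ⟨i, by have := i.isLt; omega⟩
def emM (hk : k ≤ n) : Fin (n + 1) := ⟨k, by omega⟩
def emR (hk : k ≤ n) (i : Fin (n - k)) : Fin (n + 1) := ⟨k + 1 + i, by have := i.isLt; omega⟩
def vR (hk : k ≤ n) (i : Fin (n - k)) : Fin (n + 1) := ⟨k + i, by have := i.isLt; omega⟩
def vM (hk : k ≤ n) : Fin (n + 1) := ⟨n, by omega⟩

@[simp] lemma emL_val (hk : k ≤ n) (i : Fin k) : (emL hk i : ℕ) = i := rfl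
@[simp] lemma emM_val (hk : k ≤ n) : (emM hk : ℕ) = k := rfl
@[simp] lemma emR_val (hk : k ≤ n) (i : Fin (n-k)) : (emR hk i : ℕ) = k + 1 + i := rfl
@[simp] lemma vR_val (hk : k ≤ n) (i : Fin (n-k)) : (vR hk i : ℕ) = k + i := rfl
@[simp] lemma vM_val (hk : k ≤ n) : (vM hk : ℕ) = n := rfl

section lemmas
variable (hk : k ≤ n)

-- position/value order lemmas
@[simp] lemma emL_lt_emL {a b : Fin k} : emL hk a < emL hk b ↔ a < b := by
  rw [Fin.lt_def, Fin.lt_def]; exact Iff.rfl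
@[simp] lemma emL_lt_emM {a : Fin k} : emL hk a < emM hk := by
  rw [Fin.lt_def]; exact a.isLt
@[simp] lemma emL_lt_emR {a : Fin k} {b : Fin (n-k)} : emL hk a < emR hk b := by
  rw [Fin.lt_def]; have := a.isLt; simp only [emL_val, emR_val]; omega
@[simp] lemma emM_lt_emR {b : Fin (n-k)} : emM hk < emR hk b := by
  rw [Fin.lt_def]; simp only [emM_val, emR_val]; omega
@[simp] lemma not_emM_lt_emL {a : Fin k} : ¬ emM hk < emL hk a := by
  rw [Fin.lt_def]; have := a.isLt; simp only [emM_val, emL_val]; omega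
@[simp] lemma not_emR_lt_emL {a : Fin k} {b : Fin (n-k)} : ¬ emR hk b < emL hk a := by
  rw [Fin.lt_def]; have := a.isLt; simp only [emR_val, emL_val]; omega
@[simp] lemma not_emR_lt_emM {b : Fin (n-k)} : ¬ emR hk b < emM hk := by
  rw [Fin.lt_def]; simp only [emR_val, emM_val]; omega
@[simp] lemma emR_lt_emR {a b : Fin (n-k)} : emR hk a < emR hk b ↔ a < b := by
  rw [Fin.lt_def, Fin.lt_def]; simp only [emR_val]
  exact ⟨fun h => by omega, fun h => by omega⟩
@[simp] lemma emL_lt_vR {a : Fin k} {b : Fin (n-k)} : emL hk a < vR hk b := by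
  rw [Fin.lt_def]; have := a.isLt; simp only [emL_val, vR_val]; omega
@[simp] lemma not_vR_lt_emL {a : Fin k} {b : Fin (n-k)} : ¬ vR hk b < emL hk a := by
  rw [Fin.lt_def]; have := a.isLt; simp only [vR_val, emL_val]; omega
@[simp] lemma vR_lt_vR {a b : Fin (n-k)} : vR hk a < vR hk b ↔ a < b := by
  rw [Fin.lt_def, Fin.lt_def]; simp only [vR_val]
  exact ⟨fun h => by omega, fun h => by omega⟩
@[simp] lemma emL_lt_vM {a : Fin k} : emL hk a < vM hk := by
  rw [Fin.lt_def]; have := a.isLt; simp only [emL_val, vM_val]; omega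
@[simp] lemma vR_lt_vM {b : Fin (n-k)} : vR hk b < vM hk := by
  rw [Fin.lt_def]; have := b.isLt; simp only [vR_val, vM_val]; omega
@[simp] lemma not_vM_lt_emL {a : Fin k} : ¬ vM hk < emL hk a := by
  rw [Fin.lt_def]; have := a.isLt; simp only [vM_val, emL_val]; omega
@[simp] lemma not_vM_lt_vR {b : Fin (n-k)} : ¬ vM hk < vR hk b := by
  rw [Fin.lt_def]; have := b.isLt; simp only [vM_val, vR_val]; omega

-- adjacency coercion-equation lemmas: forms (x.val = y.val + 1)
@[simp] lemma adj_LL {a b : Fin k} : (emL hk b : ℕ) = (emL hk a : ℕ) + 1 ↔ (b:ℕ) = (a:ℕ) + 1 :=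
  Iff.rfl
@[simp] lemma adj_ML {a : Fin k} : ((emL hk a : ℕ) = (emM hk : ℕ) + 1) ↔ False := by
  have := a.isLt; simp only [emL_val, emM_val, iff_false]; omega
@[simp] lemma adj_RL {a : Fin k} {b : Fin (n-k)} :
    ((emL hk a : ℕ) = (emR hk b : ℕ) + 1) ↔ False := by
  have := a.isLt; simp only [emL_val, emR_val, iff_false]; omega
@[simp] lemma adj_LM {a : Fin k} : ((emM hk : ℕ) = (emL hk a : ℕ) + 1) ↔ k = (a:ℕ) + 1 :=
  Iff.rfl
@[simp] lemma adj_MM : ((emM hk : ℕ) = (emM hk : ℕ) + 1) ↔ False := by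
  simp only [emM_val, iff_false]; omega
@[simp] lemma adj_RM {b : Fin (n-k)} : ((emM hk : ℕ) = (emR hk b : ℕ) + 1) ↔ False := by
  simp only [emM_val, emR_val, iff_false]; omega
@[simp] lemma adj_LR {a : Fin k} {b : Fin (n-k)} :
    ((emR hk b : ℕ) = (emL hk a : ℕ) + 1) ↔ False := by
  have := a.isLt; simp only [emR_val, emL_val, iff_false]; omega
@[simp] lemma adj_MR {b : Fin (n-k)} : ((emR hk b : ℕ) = (emM hk : ℕ) + 1) ↔ (b:ℕ) = 0 := by
  simp only [emR_val, emM_val]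
  exact ⟨fun h => by omega, fun h => by omega⟩
@[simp] lemma adj_RR {a b : Fin (n-k)} :
    ((emR hk b : ℕ) = (emR hk a : ℕ) + 1) ↔ (b:ℕ) = (a:ℕ) + 1 := by
  simp only [emR_val]
  exact ⟨fun h => by omega, fun h => by omega⟩

-- val-zero lemmas
@[simp] lemma emL_eq_zero {a : Fin k} : ((emL hk a : ℕ) = 0) ↔ (a:ℕ) = 0 := Iff.rfl
@[simp] lemma emM_eq_zero : ((emM hk : ℕ) = 0) ↔ k = 0 := Iff.rfl
@[simp] lemma emR_eq_zero {b : Fin (n-k)} : ((emR hk b : ℕ) = 0) ↔ False := by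
  simp only [emR_val, iff_false]; omega

end lemmas

/-- position trichotomy equivalence -/
def triP (hk : k ≤ n) : (Fin k ⊕ Unit ⊕ Fin (n - k)) ≃ Fin (n + 1) where
  toFun x := match x with
    | .inl i => emL hk i
    | .inr (.inl _) => emM hk
    | .inr (.inr j) => emR hk j
  invFun i :=
    if h : (i : ℕ) < k then .inl ⟨i, h⟩
    else if h2 : (i : ℕ) = k then .inr (.inl ())
    else .inr (.inr ⟨(i : ℕ) - (k + 1), by have := i.isLt; omega⟩)
  left_inv x := by
    rcases x with i | u | j
    · dsimp only [emL_val, emL]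
      rw [dif_pos i.isLt]
    · dsimp only [emM]
      rw [dif_neg (by omega), dif_pos rfl]
    · have := j.isLt
      dsimp only [emR]
      rw [dif_neg (by omega), dif_neg (by omega)]
      simp
  right_inv i := by
    dsimp only
    by_cases h : (i : ℕ) < k
    · rw [dif_pos h]; rfl
    · by_cases h2 : (i : ℕ) = k
      · rw [dif_neg h, dif_pos h2]
        exact Fin.ext h2.symm
      · rw [dif_neg h, dif_neg h2]
        have := i.isLt
        exact Fin.ext (by simp [emR]; omega)
  
@[simp] lemma triP_inl (hk : k ≤ n) (i : Fin k) : triP hk (.inl i) = emL hk i := rfl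
@[simp] lemma triP_inrl (hk : k ≤ n) : triP hk (.inr (.inl ())) = emM hk := rfl
@[simp] lemma triP_inrr (hk : k ≤ n) (j : Fin (n-k)) : triP hk (.inr (.inr j)) = emR hk j := rfl

/-- value trichotomy equivalence -/
def triV (hk : k ≤ n) : (Fin k ⊕ Unit ⊕ Fin (n - k)) ≃ Fin (n + 1) where
  toFun x := match x with
    | .inl i => emL hk i
    | .inr (.inl _) => vM hk
    | .inr (.inr j) => vR hk j
  invFun i :=
    if h : (i : ℕ) < k then .inl ⟨i, h⟩
    else if h2 : (i : ℕ) = n then .inr (.inl ())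
    else .inr (.inr ⟨(i : ℕ) - k, by have := i.isLt; omega⟩)
  left_inv x := by
    rcases x with i | u | j
    · dsimp only [emL]
      rw [dif_pos i.isLt]
    · dsimp only [vM]
      rw [dif_neg (by omega), dif_pos rfl]
    · have := j.isLt
      dsimp only [vR]
      rw [dif_neg (by omega), dif_neg (by omega)]
      simp
  right_inv i := by
    dsimp only
    by_cases h : (i : ℕ) < k
    · rw [dif_pos h]; rfl
    · by_cases h2 : (i : ℕ) = n
      · rw [dif_neg h, dif_pos h2]
        exact Fin.ext h2.symm
      · rw [dif_neg h, dif_neg h2]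
        have := i.isLt
        exact Fin.ext (by simp [vR]; omega)

/-- the join of σ, max, τ -/
def join (hk : k ≤ n) (σ : Equiv.Perm (Fin k)) (τ : Equiv.Perm (Fin (n - k))) :
    Equiv.Perm (Fin (n + 1)) :=
  ((triP hk).symm.trans
    (Equiv.sumCongr σ (Equiv.sumCongr (Equiv.refl Unit) τ))).trans (triV hk)

section joinLemmas
variable (hk : k ≤ n) (σ : Equiv.Perm (Fin k)) (τ : Equiv.Perm (Fin (n - k)))

lemma triP_symm_emL (i : Fin k) : (triP hk).symm (emL hk i) = .inl i := by
  rw [Equiv.symm_apply_eq]; rfl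
lemma triP_symm_emM : (triP hk).symm (emM hk) = .inr (.inl ()) := by
  rw [Equiv.symm_apply_eq]; rfl
lemma triP_symm_emR (j : Fin (n-k)) : (triP hk).symm (emR hk j) = .inr (.inr j) := by
  rw [Equiv.symm_apply_eq]; rfl

@[simp] lemma join_emL (i : Fin k) : join hk σ τ (emL hk i) = emL hk (σ i) := by
  simp only [join, Equiv.trans_apply, triP_symm_emL]; rfl
@[simp] lemma join_emM : join hk σ τ (emM hk) = vM hk := by
  simp only [join, Equiv.trans_apply, triP_symm_emM]; rfl
@[simp] lemma join_emR (j : Fin (n-k)) : join hk σ τ (emR hk j) = vR hk (τ j) := by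
  simp only [join, Equiv.trans_apply, triP_symm_emR]; rfl

end joinLemmas

/-- splitting a sum over `Fin (n+1)` into the three regions -/
lemma sum_split {M : Type*} [AddCommMonoid M] (hk : k ≤ n) (f : Fin (n + 1) → M) :
    ∑ i, f i = (∑ i : Fin k, f (emL hk i)) + (f (emM hk) +
      ∑ i : Fin (n - k), f (emR hk i)) := by
  rw [← Equiv.sum_comp (triP hk) f, Fintype.sum_sum_type, Fintype.sum_sum_type]
  simp [triP]

-- helper sums
lemma sum_ite_val_zero {m : ℕ} (c : ℕ) :
    (∑ j : Fin m, if (j : ℕ) = 0 then c else 0) = if m = 0 then 0 else c := by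
  cases m with
  | zero => simp
  | succ m =>
    rw [if_neg (Nat.succ_ne_zero m),
      Finset.sum_eq_single_of_mem (f := fun j : Fin (m+1) => if (j : ℕ) = 0 then c else 0)
        (0 : Fin (m+1)) (Finset.mem_univ _)
        (fun b _ hb => if_neg (fun h => hb (Fin.ext h)))]
    simp

lemma sum_ite_pred {m : ℕ} (c : ℕ) :
    (∑ j : Fin m, if m = (j : ℕ) + 1 then c else 0) = if m = 0 then 0 else c := by
  cases m with
  | zero => simp
  | succ m =>
    rw [if_neg (Nat.succ_ne_zero m),
      Finset.sum_eq_single_of_mem (Fin.last m) (Finset.mem_univ _)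
        (fun b _ hb => if_neg (by
          have hb' : (b : ℕ) ≠ m := by simpa [Fin.ext_iff, Fin.val_last] using hb
          omega))]
    simp



def desSt {N : ℕ} (π : Equiv.Perm (Fin N)) : ℕ :=
  (univ.filter fun p : Fin N × Fin N => (p.2 : ℕ) = (p.1 : ℕ) + 1 ∧ π p.2 < π p.1).card
def ascSt {N : ℕ} (π : Equiv.Perm (Fin N)) : ℕ :=
  (univ.filter fun p : Fin N × Fin N => (p.2 : ℕ) = (p.1 : ℕ) + 1 ∧ π p.1 < π p.2).card
def eSt {N : ℕ} (π : Equiv.Perm (Fin N)) : ℕ :=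
  (univ.filter fun p : Fin N × Fin N => (p.1 : ℕ) = 0 ∧ p.1 < p.2 ∧ π p.2 < π p.1).card
def gSt {N : ℕ} (π : Equiv.Perm (Fin N)) : ℕ :=
  (univ.filter fun p : Fin N × Fin N => (p.1 : ℕ) = 0 ∧ p.1 < p.2 ∧ π p.1 < π p.2).card

section JoinStats
variable (hk : k ≤ n) (σ : Equiv.Perm (Fin k)) (τ : Equiv.Perm (Fin (n - k)))

lemma desSt_join :
    desSt (join hk σ τ) = desSt σ + desSt τ + (if n - k = 0 then 0 else 1) := by
  rw [desSt, desSt, desSt]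
  rw [Finset.card_filter, Finset.card_filter, Finset.card_filter]
  simp only [Fintype.sum_prod_type]
  simp only [sum_split hk]
  simp only [join_emL, join_emM, join_emR, emL_lt_emL, emL_lt_emM, emL_lt_emR, emM_lt_emR,
    not_emM_lt_emL, not_emR_lt_emL, not_emR_lt_emM, emR_lt_emR, emL_lt_vR, not_vR_lt_emL,
    vR_lt_vR, emL_lt_vM, vR_lt_vM, not_vM_lt_emL, not_vM_lt_vR, adj_LL, adj_ML, adj_RL,
    adj_LM, adj_MM, adj_RM, adj_LR, adj_MR, adj_RR, emL_eq_zero, emM_eq_zero, emR_eq_zero,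
    lt_self_iff_false, true_and, and_true, false_and, and_false, if_true, if_false,
    mul_ite, Finset.sum_add_distrib, sum_ite_val_zero, sum_ite_pred,
    Finset.sum_const_zero, Finset.sum_const, Finset.card_univ, Fintype.card_fin,
    smul_eq_mul, mul_zero, zero_mul, mul_one, one_mul, add_zero, zero_add]
  try ring

lemma ascSt_join :
    ascSt (join hk σ τ) = ascSt σ + ascSt τ + (if k = 0 then 0 else 1) := by
  rw [ascSt, ascSt, ascSt]
  rw [Finset.card_filter, Finset.card_filter, Finset.card_filter]
  simp only [Fintype.sum_prod_type]
  simp only [sum_split hk]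
  simp only [join_emL, join_emM, join_emR, emL_lt_emL, emL_lt_emM, emL_lt_emR, emM_lt_emR,
    not_emM_lt_emL, not_emR_lt_emL, not_emR_lt_emM, emR_lt_emR, emL_lt_vR, not_vR_lt_emL,
    vR_lt_vR, emL_lt_vM, vR_lt_vM, not_vM_lt_emL, not_vM_lt_vR, adj_LL, adj_ML, adj_RL,
    adj_LM, adj_MM, adj_RM, adj_LR, adj_MR, adj_RR, emL_eq_zero, emM_eq_zero, emR_eq_zero,
    lt_self_iff_false, true_and, and_true, false_and, and_false, if_true, if_false,
    mul_ite, Finset.sum_add_distrib, sum_ite_val_zero, sum_ite_pred,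
    Finset.sum_const_zero, Finset.sum_const, Finset.card_univ, Fintype.card_fin,
    smul_eq_mul, mul_zero, zero_mul, mul_one, one_mul, add_zero, zero_add]
  try ring

lemma eSt_join :
    eSt (join hk σ τ) = eSt σ + (n - k) * (if k = 0 then 1 else 0) := by
  rw [eSt, eSt]
  rw [Finset.card_filter, Finset.card_filter]
  simp only [Fintype.sum_prod_type]
  simp only [sum_split hk]
  simp only [join_emL, join_emM, join_emR, emL_lt_emL, emL_lt_emM, emL_lt_emR, emM_lt_emR,
    not_emM_lt_emL, not_emR_lt_emL, not_emR_lt_emM, emR_lt_emR, emL_lt_vR, not_vR_lt_emL,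
    vR_lt_vR, emL_lt_vM, vR_lt_vM, not_vM_lt_emL, not_vM_lt_vR, adj_LL, adj_ML, adj_RL,
    adj_LM, adj_MM, adj_RM, adj_LR, adj_MR, adj_RR, emL_eq_zero, emM_eq_zero, emR_eq_zero,
    lt_self_iff_false, true_and, and_true, false_and, and_false, if_true, if_false,
    mul_ite, Finset.sum_add_distrib, sum_ite_val_zero, sum_ite_pred,
    Finset.sum_const_zero, Finset.sum_const, Finset.card_univ, Fintype.card_fin,
    smul_eq_mul, mul_zero, zero_mul, mul_one, one_mul, add_zero, zero_add]
  try ring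

lemma gSt_join :
    gSt (join hk σ τ) = gSt σ + (if k = 0 then 0 else 1) + (if k = 0 then 0 else (n - k)) := by
  rw [gSt, gSt]
  rw [Finset.card_filter, Finset.card_filter]
  simp only [Fintype.sum_prod_type]
  simp only [sum_split hk]
  simp only [join_emL, join_emM, join_emR, emL_lt_emL, emL_lt_emM, emL_lt_emR, emM_lt_emR,
    not_emM_lt_emL, not_emR_lt_emL, not_emR_lt_emM, emR_lt_emR, emL_lt_vR, not_vR_lt_emL,
    vR_lt_vR, emL_lt_vM, vR_lt_vM, not_vM_lt_emL, not_vM_lt_vR, adj_LL, adj_ML, adj_RL,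
    adj_LM, adj_MM, adj_RM, adj_LR, adj_MR, adj_RR, emL_eq_zero, emM_eq_zero, emR_eq_zero,
    lt_self_iff_false, true_and, and_true, false_and, and_false, if_true, if_false,
    mul_ite, Finset.sum_add_distrib, sum_ite_val_zero, sum_ite_pred,
    Finset.sum_const_zero, Finset.sum_const, Finset.card_univ, Fintype.card_fin,
    smul_eq_mul, mul_zero, zero_mul, mul_one, one_mul, add_zero, zero_add]
  try ring

lemma occ3d21_join :
    occ3d21 (join hk σ τ) = occ3d21 σ + occ3d21 τ + desSt τ := by
  rw [occ3d21, occ3d21, occ3d21, desSt]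
  rw [Finset.card_filter, Finset.card_filter, Finset.card_filter, Finset.card_filter]
  simp only [Fintype.sum_prod_type]
  simp only [sum_split hk]
  simp only [join_emL, join_emM, join_emR, emL_lt_emL, emL_lt_emM, emL_lt_emR, emM_lt_emR,
    not_emM_lt_emL, not_emR_lt_emL, not_emR_lt_emM, emR_lt_emR, emL_lt_vR, not_vR_lt_emL,
    vR_lt_vR, emL_lt_vM, vR_lt_vM, not_vM_lt_emL, not_vM_lt_vR, adj_LL, adj_ML, adj_RL,
    adj_LM, adj_MM, adj_RM, adj_LR, adj_MR, adj_RR, emL_eq_zero, emM_eq_zero, emR_eq_zero,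
    lt_self_iff_false, true_and, and_true, false_and, and_false, if_true, if_false,
    mul_ite, Finset.sum_add_distrib, sum_ite_val_zero, sum_ite_pred,
    Finset.sum_const_zero, Finset.sum_const, Finset.card_univ, Fintype.card_fin,
    smul_eq_mul, mul_zero, zero_mul, mul_one, one_mul, add_zero, zero_add]
  try ring

lemma occ3d12_join :
    occ3d12 (join hk σ τ) = occ3d12 σ + occ3d12 τ + ascSt τ := by
  rw [occ3d12, occ3d12, occ3d12, ascSt]
  rw [Finset.card_filter, Finset.card_filter, Finset.card_filter, Finset.card_filter]
  simp only [Fintype.sum_prod_type]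
  simp only [sum_split hk]
  simp only [join_emL, join_emM, join_emR, emL_lt_emL, emL_lt_emM, emL_lt_emR, emM_lt_emR,
    not_emM_lt_emL, not_emR_lt_emL, not_emR_lt_emM, emR_lt_emR, emL_lt_vR, not_vR_lt_emL,
    vR_lt_vR, emL_lt_vM, vR_lt_vM, not_vM_lt_emL, not_vM_lt_vR, adj_LL, adj_ML, adj_RL,
    adj_LM, adj_MM, adj_RM, adj_LR, adj_MR, adj_RR, emL_eq_zero, emM_eq_zero, emR_eq_zero,
    lt_self_iff_false, true_and, and_true, false_and, and_false, if_true, if_false,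
    mul_ite, Finset.sum_add_distrib, sum_ite_val_zero, sum_ite_pred,
    Finset.sum_const_zero, Finset.sum_const, Finset.card_univ, Fintype.card_fin,
    smul_eq_mul, mul_zero, zero_mul, mul_one, one_mul, add_zero, zero_add]
  try ring

lemma occ32d1_join :
    occ32d1 (join hk σ τ) = occ32d1 σ + occ32d1 τ + eSt τ := by
  rw [occ32d1, occ32d1, occ32d1, eSt]
  rw [Finset.card_filter, Finset.card_filter, Finset.card_filter, Finset.card_filter]
  simp only [Fintype.sum_prod_type]
  simp only [sum_split hk]
  simp only [join_emL, join_emM, join_emR, emL_lt_emL, emL_lt_emM, emL_lt_emR, emM_lt_emR,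
    not_emM_lt_emL, not_emR_lt_emL, not_emR_lt_emM, emR_lt_emR, emL_lt_vR, not_vR_lt_emL,
    vR_lt_vR, emL_lt_vM, vR_lt_vM, not_vM_lt_emL, not_vM_lt_vR, adj_LL, adj_ML, adj_RL,
    adj_LM, adj_MM, adj_RM, adj_LR, adj_MR, adj_RR, emL_eq_zero, emM_eq_zero, emR_eq_zero,
    lt_self_iff_false, true_and, and_true, false_and, and_false, if_true, if_false,
    mul_ite, Finset.sum_add_distrib, sum_ite_val_zero, sum_ite_pred,
    Finset.sum_const_zero, Finset.sum_const, Finset.card_univ, Fintype.card_fin,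
    smul_eq_mul, mul_zero, zero_mul, mul_one, one_mul, add_zero, zero_add]
  try ring

lemma occ31d2_join :
    occ31d2 (join hk σ τ) = occ31d2 σ + occ31d2 τ + gSt τ := by
  rw [occ31d2, occ31d2, occ31d2, gSt]
  rw [Finset.card_filter, Finset.card_filter, Finset.card_filter, Finset.card_filter]
  simp only [Fintype.sum_prod_type]
  simp only [sum_split hk]
  simp only [join_emL, join_emM, join_emR, emL_lt_emL, emL_lt_emM, emL_lt_emR, emM_lt_emR,
    not_emM_lt_emL, not_emR_lt_emL, not_emR_lt_emM, emR_lt_emR, emL_lt_vR, not_vR_lt_emL,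
    vR_lt_vR, emL_lt_vM, vR_lt_vM, not_vM_lt_emL, not_vM_lt_vR, adj_LL, adj_ML, adj_RL,
    adj_LM, adj_MM, adj_RM, adj_LR, adj_MR, adj_RR, emL_eq_zero, emM_eq_zero, emR_eq_zero,
    lt_self_iff_false, true_and, and_true, false_and, and_false, if_true, if_false,
    mul_ite, Finset.sum_add_distrib, sum_ite_val_zero, sum_ite_pred,
    Finset.sum_const_zero, Finset.sum_const, Finset.card_univ, Fintype.card_fin,
    smul_eq_mul, mul_zero, zero_mul, mul_one, one_mul, add_zero, zero_add]
  try ring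

lemma occ13d2_join :
    occ13d2 (join hk σ τ) = occ13d2 σ + occ13d2 τ + (if k = 0 then 0 else (n - k)) := by
  rw [occ13d2, occ13d2, occ13d2]
  rw [Finset.card_filter, Finset.card_filter, Finset.card_filter]
  simp only [Fintype.sum_prod_type]
  simp only [sum_split hk]
  simp only [join_emL, join_emM, join_emR, emL_lt_emL, emL_lt_emM, emL_lt_emR, emM_lt_emR,
    not_emM_lt_emL, not_emR_lt_emL, not_emR_lt_emM, emR_lt_emR, emL_lt_vR, not_vR_lt_emL,
    vR_lt_vR, emL_lt_vM, vR_lt_vM, not_vM_lt_emL, not_vM_lt_vR, adj_LL, adj_ML, adj_RL,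
    adj_LM, adj_MM, adj_RM, adj_LR, adj_MR, adj_RR, emL_eq_zero, emM_eq_zero, emR_eq_zero,
    lt_self_iff_false, true_and, and_true, false_and, and_false, if_true, if_false,
    mul_ite, Finset.sum_add_distrib, sum_ite_val_zero, sum_ite_pred,
    Finset.sum_const_zero, Finset.sum_const, Finset.card_univ, Fintype.card_fin,
    smul_eq_mul, mul_zero, zero_mul, mul_one, one_mul, add_zero, zero_add]
  try ring

lemma occ1d32_join :
    occ1d32 (join hk σ τ) = occ1d32 σ + occ1d32 τ + k * desSt τ
      + k * (if n - k = 0 then 0 else 1) := by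
  rw [occ1d32, occ1d32, occ1d32, desSt]
  rw [Finset.card_filter, Finset.card_filter, Finset.card_filter, Finset.card_filter]
  simp only [Fintype.sum_prod_type]
  simp only [sum_split hk]
  simp only [join_emL, join_emM, join_emR, emL_lt_emL, emL_lt_emM, emL_lt_emR, emM_lt_emR,
    not_emM_lt_emL, not_emR_lt_emL, not_emR_lt_emM, emR_lt_emR, emL_lt_vR, not_vR_lt_emL,
    vR_lt_vR, emL_lt_vM, vR_lt_vM, not_vM_lt_emL, not_vM_lt_vR, adj_LL, adj_ML, adj_RL,
    adj_LM, adj_MM, adj_RM, adj_LR, adj_MR, adj_RR, emL_eq_zero, emM_eq_zero, emR_eq_zero,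
    lt_self_iff_false, true_and, and_true, false_and, and_false, if_true, if_false,
    mul_ite, Finset.sum_add_distrib, sum_ite_val_zero, sum_ite_pred,
    Finset.sum_const_zero, Finset.sum_const, Finset.card_univ, Fintype.card_fin,
    smul_eq_mul, mul_zero, zero_mul, mul_one, one_mul, add_zero, zero_add]
  try ring

end JoinStats

lemma avoid_iff {N : ℕ} (π : Equiv.Perm (Fin N)) :
    π ∈ avoid231 N ↔ ∀ i j l : Fin N, i < j → j < l → ¬(π l < π i ∧ π i < π j) := by
  simp [avoid231]

section Decomp

def posMax (π : Equiv.Perm (Fin (n + 1))) : ℕ := ((π.symm (Fin.last n)) : ℕ)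

lemma posMax_le (π : Equiv.Perm (Fin (n + 1))) : posMax π ≤ n := Nat.lt_succ_iff.mp (Fin.isLt _)

lemma cross (π : Equiv.Perm (Fin (n + 1))) (hπ : π ∈ avoid231 (n+1)) {i j : Fin (n+1)}
    (hi : (i : ℕ) < posMax π) (hj : posMax π < (j : ℕ)) : π i < π j := by
  rw [avoid_iff] at hπ
  set K := π.symm (Fin.last n) with hK
  have hiK : i < K := by rw [Fin.lt_def]; exact hi
  have hKj : K < j := by rw [Fin.lt_def]; exact hj
  have h1 : π K = Fin.last n := π.apply_symm_apply _
  have hne : π i ≠ Fin.last n := by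
    intro h; rw [← h1] at h; exact absurd (π.injective h) (ne_of_lt hiK)
  have h2 : π i < π K := h1 ▸ lt_of_le_of_ne (Fin.le_last _) hne
  have h4 : ¬ π j < π i := fun hlt => hπ i K j hiK hKj ⟨hlt, h2⟩
  have hne2 : π i ≠ π j := fun h =>
    absurd (π.injective h) (ne_of_lt (hiK.trans hKj))
  exact lt_of_le_of_ne (le_of_not_gt h4) hne2

lemma lowBound (π : Equiv.Perm (Fin (n + 1))) (hπ : π ∈ avoid231 (n+1)) {i : Fin (n+1)}
    (hi : (i : ℕ) < posMax π) : ((π i : ℕ)) < posMax π := by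
  by_contra hcon
  push_neg at hcon
  set K := π.symm (Fin.last n) with hK
  have hiK : i < K := by rw [Fin.lt_def]; exact hi
  have h1 : π K = Fin.last n := π.apply_symm_apply _
  have hne : π i ≠ Fin.last n := by
    intro h; rw [← h1] at h; exact absurd (π.injective h) (ne_of_lt hiK)
  have h2 : π i < π K := h1 ▸ lt_of_le_of_ne (Fin.le_last _) hne
  have hmaps : ∀ a ∈ insert K (Finset.Ioi K), π a ∈ Finset.Ioi (π i) := by
    intro a ha
    rcases Finset.mem_insert.mp ha with rfl | ha'
    · exact Finset.mem_Ioi.mpr h2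
    · have haK : K < a := Finset.mem_Ioi.mp ha'
      exact Finset.mem_Ioi.mpr (cross π hπ hi (Fin.lt_def.mp haK))
  have hcard := Finset.card_le_card_of_injOn π hmaps (π.injective.injOn)
  rw [Finset.card_insert_of_notMem (by simp), Fin.card_Ioi, Fin.card_Ioi] at hcard
  have h5 : (π i : ℕ) ≤ n := Nat.lt_succ_iff.mp (Fin.isLt _)
  have h6 : posMax π ≤ n := posMax_le π
  have hpm : posMax π = (K : ℕ) := rfl
  omega

lemma highBound (π : Equiv.Perm (Fin (n + 1))) (hπ : π ∈ avoid231 (n+1)) {i : Fin (n+1)}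
    (hi : posMax π < (i : ℕ)) : posMax π ≤ ((π i : ℕ)) ∧ ((π i : ℕ)) < n := by
  set K := π.symm (Fin.last n) with hK
  have hKi : K < i := by rw [Fin.lt_def]; exact hi
  have h1 : π K = Fin.last n := π.apply_symm_apply _
  have hne : π i ≠ Fin.last n := by
    intro h; rw [← h1] at h; exact absurd (π.injective h) (ne_of_gt hKi)
  constructor
  · by_contra hcon
    push_neg at hcon
    have hsub : (Finset.Iio K).image π ⊆ Finset.Iio K := by
      intro v hv
      obtain ⟨a, ha, rfl⟩ := Finset.mem_image.mp hv
      have haK : a < K := Finset.mem_Iio.mp ha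
      exact Finset.mem_Iio.mpr (by
        rw [Fin.lt_def]; exact lowBound π hπ (Fin.lt_def.mp haK))
    have hcards : ((Finset.Iio K).image π).card = (Finset.Iio K).card :=
      Finset.card_image_of_injective _ π.injective
    have heq : (Finset.Iio K).image π = Finset.Iio K :=
      Finset.eq_of_subset_of_card_le hsub (le_of_eq hcards.symm)
    have hmem : π i ∈ Finset.Iio K := Finset.mem_Iio.mpr (by rw [Fin.lt_def]; exact hcon)
    rw [← heq] at hmem
    obtain ⟨a, ha, hpa⟩ := Finset.mem_image.mp hmem
    have hai : a = i := π.injective hpa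
    rw [hai] at ha
    have haK : i < K := Finset.mem_Iio.mp ha
    have := Fin.lt_def.mp haK
    omega
  · have := Fin.isLt (π i)
    rcases Nat.lt_succ_iff_lt_or_eq.mp this with h | h
    · exact h
    · exact absurd (Fin.ext h : π i = Fin.last n) hne

noncomputable def restrictL (π : Equiv.Perm (Fin (n + 1))) (hk : k ≤ n) :
    Equiv.Perm (Fin k) :=
  if h : ∀ i : Fin k, ((π (emL hk i) : ℕ)) < k then
    Equiv.ofBijective (fun i => (⟨(π (emL hk i) : ℕ), h i⟩ : Fin k))
      (Finite.injective_iff_bijective.mp (fun a b hab => by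
        have h1 : ((π (emL hk a)) : ℕ) = ((π (emL hk b)) : ℕ) := by
          simpa using congrArg Fin.val hab
        have h2 : emL hk a = emL hk b := π.injective (Fin.ext h1)
        have h3 : (a : ℕ) = (b : ℕ) := by simpa [emL] using congrArg Fin.val h2
        exact Fin.ext h3))
  else 1

noncomputable def restrictR (π : Equiv.Perm (Fin (n + 1))) (hk : k ≤ n) :
    Equiv.Perm (Fin (n - k)) :=
  if h : ∀ j : Fin (n-k), k ≤ ((π (emR hk j) : ℕ)) ∧ ((π (emR hk j) : ℕ)) < n then
    Equiv.ofBijective (fun j => (⟨(π (emR hk j) : ℕ) - k, by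
        have := (h j).1; have := (h j).2; omega⟩ : Fin (n - k)))
      (Finite.injective_iff_bijective.mp (fun a b hab => by
        have h1 : ((π (emR hk a)) : ℕ) - k = ((π (emR hk b)) : ℕ) - k := by
          simpa using congrArg Fin.val hab
        have h2 : emR hk a = emR hk b := π.injective (Fin.ext (by
          have := (h a).1; have := (h b).1; omega))
        have h3 : k + 1 + (a : ℕ) = k + 1 + (b : ℕ) := by
          simpa [emR] using congrArg Fin.val h2
        exact Fin.ext (by omega)))
  else 1

lemma restrictL_apply (π : Equiv.Perm (Fin (n + 1))) (hk : k ≤ n) (h : ∀ i : Fin k, ((π (emL hk i) : ℕ)) < k) (i : Fin k) :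
    ((restrictL π hk i : ℕ)) = ((π (emL hk i) : ℕ)) := by
  rw [restrictL, dif_pos h]; rfl

lemma restrictR_apply (π : Equiv.Perm (Fin (n + 1))) (hk : k ≤ n)
    (h : ∀ j : Fin (n-k), k ≤ ((π (emR hk j) : ℕ)) ∧ ((π (emR hk j) : ℕ)) < n)
    (j : Fin (n - k)) :
    ((restrictR π hk j : ℕ)) = ((π (emR hk j) : ℕ)) - k := by
  rw [restrictR, dif_pos h]; rfl

lemma restrictL_mem (π : Equiv.Perm (Fin (n + 1))) (hk : k ≤ n) (h : ∀ i : Fin k, ((π (emL hk i) : ℕ)) < k)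
    (hπ : π ∈ avoid231 (n+1)) : restrictL π hk ∈ avoid231 k := by
  rw [avoid_iff] at hπ ⊢
  intro i j l hij hjl ⟨h1, h2⟩
  rw [Fin.lt_def, restrictL_apply π hk h, restrictL_apply π hk h] at h1 h2
  refine hπ (emL hk i) (emL hk j) (emL hk l) ?_ ?_ ⟨?_, ?_⟩
  · rw [Fin.lt_def]; exact hij
  · rw [Fin.lt_def]; exact hjl
  · rw [Fin.lt_def]; exact h1
  · rw [Fin.lt_def]; exact h2

lemma restrictR_mem (π : Equiv.Perm (Fin (n + 1))) (hk : k ≤ n)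
    (h : ∀ j : Fin (n-k), k ≤ ((π (emR hk j) : ℕ)) ∧ ((π (emR hk j) : ℕ)) < n)
    (hπ : π ∈ avoid231 (n+1)) : restrictR π hk ∈ avoid231 (n - k) := by
  rw [avoid_iff] at hπ ⊢
  intro i j l hij hjl ⟨h1, h2⟩
  rw [Fin.lt_def, restrictR_apply π hk h, restrictR_apply π hk h] at h1 h2
  refine hπ (emR hk i) (emR hk j) (emR hk l) ?_ ?_ ⟨?_, ?_⟩
  · rw [Fin.lt_def]; simp only [emR]; omega
  · rw [Fin.lt_def]; simp only [emR]; omega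
  · rw [Fin.lt_def]; have := (h i).1; have := (h l).1; omega
  · rw [Fin.lt_def]; have := (h i).1; have := (h j).1; omega

end Decomp

section JoinMem
variable (hk : k ≤ n) (σ : Equiv.Perm (Fin k)) (τ : Equiv.Perm (Fin (n - k)))

lemma posMax_join : posMax (join hk σ τ) = k := by
  have h1 : Fin.last n = vM hk := Fin.ext rfl
  rw [posMax, h1, ← join_emM hk σ τ, Equiv.symm_apply_apply]
  rfl

lemma lowBound_join (i : Fin k) : ((join hk σ τ (emL hk i) : ℕ)) < k := by
  rw [join_emL]; exact (σ i).isLt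

lemma highBound_join (j : Fin (n - k)) :
    k ≤ ((join hk σ τ (emR hk j) : ℕ)) ∧ ((join hk σ τ (emR hk j) : ℕ)) < n := by
  rw [join_emR]
  have := (τ j).isLt
  constructor
  · simp only [vR]; omega
  · simp only [vR]; omega

lemma restrictL_join : restrictL (join hk σ τ) hk = σ := by
  apply Equiv.ext
  intro i
  apply Fin.ext
  rw [restrictL_apply _ hk (lowBound_join hk σ τ), join_emL]
  rfl

lemma restrictR_join : restrictR (join hk σ τ) hk = τ := by
  apply Equiv.ext
  intro j
  apply Fin.ext
  rw [restrictR_apply _ hk (highBound_join hk σ τ), join_emR]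
  simp only [vR]
  omega

lemma join_restrict (π : Equiv.Perm (Fin (n+1))) (hπ : π ∈ avoid231 (n+1))
    (hkp : k = posMax π) : join hk (restrictL π hk) (restrictR π hk) = π := by
  have hL : ∀ i : Fin k, ((π (emL hk i) : ℕ)) < k := fun i => by
    have h0 : ((emL hk i : ℕ)) < posMax π := by
      have := i.isLt; simp only [emL_val]; omega
    have := lowBound π hπ h0
    omega
  have hR : ∀ j : Fin (n-k), k ≤ ((π (emR hk j) : ℕ)) ∧ ((π (emR hk j) : ℕ)) < n := fun j => by
    have h0 : posMax π < ((emR hk j : ℕ)) := by simp only [emR_val]; omega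
    have h2 := highBound π hπ h0
    exact ⟨by omega, h2.2⟩
  apply Equiv.ext
  intro x
  rcases (triP hk).surjective x with ⟨y, rfl⟩
  rcases y with i | u | j
  · rw [triP_inl, join_emL]
    apply Fin.ext
    simp only [emL_val]
    rw [restrictL_apply π hk hL]
  · rcases u
    rw [triP_inrl, join_emM]
    have hKeq : emM hk = π.symm (Fin.last n) := Fin.ext hkp
    rw [hKeq, Equiv.apply_symm_apply]
    rfl
  · rw [triP_inrr, join_emR]
    apply Fin.ext
    simp only [vR]
    rw [restrictR_apply π hk hR]
    have := (hR j).1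
    omega

lemma join_mem (hσ : σ ∈ avoid231 k) (hτ : τ ∈ avoid231 (n-k)) :
    join hk σ τ ∈ avoid231 (n+1) := by
  rw [avoid_iff] at hσ hτ ⊢
  intro a b c hab hbc
  rcases (triP hk).surjective a with ⟨x, rfl⟩
  rcases (triP hk).surjective b with ⟨y, rfl⟩
  rcases (triP hk).surjective c with ⟨z, rfl⟩
  rcases x with i | u | i <;> rcases y with j | v | j <;> rcases z with l | w | l <;>
    (try rcases u) <;> (try rcases v) <;> (try rcases w) <;>
    simp only [triP_inl, triP_inrl, triP_inrr, join_emL, join_emM, join_emR,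
      emL_lt_emL, emL_lt_emM, emL_lt_emR, emM_lt_emR, not_emM_lt_emL, not_emR_lt_emL,
      not_emR_lt_emM, emR_lt_emR, emL_lt_vR, not_vR_lt_emL, vR_lt_vR, emL_lt_vM,
      vR_lt_vM, not_vM_lt_emL, not_vM_lt_vR, lt_self_iff_false,
      true_and, and_true, false_and, and_false, not_false_iff] at hab hbc ⊢ <;>
    first
      | exact hab | exact hbc | exact not_false
      | exact hσ _ _ _ hab hbc
      | exact hτ _ _ _ hab hbc

end JoinMem

noncomputable def joinP (n k : ℕ) (σ : Equiv.Perm (Fin k)) (τ : Equiv.Perm (Fin (n - k))) :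
    Equiv.Perm (Fin (n + 1)) :=
  if hk : k ≤ n then join hk σ τ else 1

lemma joinP_eq (hk : k ≤ n) (σ : Equiv.Perm (Fin k)) (τ : Equiv.Perm (Fin (n - k))) :
    joinP n k σ τ = join hk σ τ := dif_pos hk

lemma sigma_perm_ext {n : ℕ} (x y : Σ k : ℕ, Equiv.Perm (Fin k) × Equiv.Perm (Fin (n - k)))
    (h1 : x.1 = y.1)
    (h2 : ∀ i : Fin x.1, ((x.2.1 i : ℕ)) = ((y.2.1 (Fin.cast h1 i) : ℕ)))
    (h3 : ∀ j : Fin (n - x.1), ((x.2.2 j : ℕ)) =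
      ((y.2.2 (Fin.cast (by rw [h1]) j) : ℕ))) : x = y := by
  obtain ⟨a, p, q⟩ := x
  obtain ⟨b, r, s⟩ := y
  dsimp only at h1
  subst h1
  dsimp only at h2 h3
  have hp : p = r := Equiv.ext fun i => Fin.ext (by simpa using h2 i)
  have hq : q = s := Equiv.ext fun j => Fin.ext (by simpa using h3 j)
  rw [hp, hq]

lemma sum_decomp (F : Equiv.Perm (Fin (n+1)) → ℕ) :
    ∑ π ∈ avoid231 (n+1), F π
      = ∑ k ∈ range (n+1), ∑ σ ∈ avoid231 k, ∑ τ ∈ avoid231 (n-k), F (joinP n k σ τ) := by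
  have hps : ∀ k ∈ range (n+1),
      (∑ σ ∈ avoid231 k, ∑ τ ∈ avoid231 (n-k), F (joinP n k σ τ))
        = ∑ p ∈ avoid231 k ×ˢ avoid231 (n-k), F (joinP n k p.1 p.2) :=
    fun k _ => by rw [Finset.sum_product]
  rw [Finset.sum_congr rfl hps, Finset.sum_sigma']
  refine Finset.sum_bij'
    (fun π _ => (⟨posMax π, (restrictL π (posMax_le π), restrictR π (posMax_le π))⟩ :
      Σ k : ℕ, Equiv.Perm (Fin k) × Equiv.Perm (Fin (n - k))))
    (fun x _ => joinP n x.1 x.2.1 x.2.2) ?_ ?_ ?_ ?_ ?_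
  · -- i maps into sigma set
    intro π hπ
    rw [Finset.mem_sigma]
    constructor
    · exact Finset.mem_range.mpr (Nat.lt_succ_of_le (posMax_le π))
    · rw [Finset.mem_product]
      have hL : ∀ i : Fin (posMax π), ((π (emL (posMax_le π) i) : ℕ)) < posMax π := fun i => by
        refine lowBound π hπ ?_
        simp only [emL_val]; exact i.isLt
      have hR : ∀ j : Fin (n - posMax π),
          posMax π ≤ ((π (emR (posMax_le π) j) : ℕ)) ∧ ((π (emR (posMax_le π) j) : ℕ)) < n :=
        fun j => highBound π hπ (by simp only [emR_val]; omega)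
      exact ⟨restrictL_mem π (posMax_le π) hL hπ, restrictR_mem π (posMax_le π) hR hπ⟩
  · -- j maps into avoid
    intro x hx
    obtain ⟨k, σ, τ⟩ := x
    rw [Finset.mem_sigma, Finset.mem_product] at hx
    dsimp only at hx ⊢
    have hk : k ≤ n := Nat.lt_succ_iff.mp (Finset.mem_range.mp hx.1)
    rw [joinP_eq hk]
    exact join_mem hk _ _ hx.2.1 hx.2.2
  · -- left inverse : joinP (decomp π) = π
    intro π hπ
    dsimp only
    rw [joinP_eq (posMax_le π)]
    exact join_restrict (posMax_le π) π hπ rfl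
  · -- right inverse : decomp (joinP x) = x
    intro x hx
    rw [Finset.mem_sigma, Finset.mem_product] at hx
    obtain ⟨k, σ, τ⟩ := x
    dsimp only at hx ⊢
    have hk : k ≤ n := Nat.lt_succ_iff.mp (Finset.mem_range.mp hx.1)
    rw [joinP_eq hk]
    have h1 : posMax (join hk σ τ) = k := posMax_join hk σ τ
    refine sigma_perm_ext _ _ h1 ?_ ?_
    · intro i
      dsimp only
      have hb : ∀ i' : Fin (posMax (join hk σ τ)),
          (((join hk σ τ) (emL (posMax_le _) i') : ℕ)) < posMax (join hk σ τ) := by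
        intro i'
        have he : emL (posMax_le (join hk σ τ)) i' = emL hk (Fin.cast h1 i') := Fin.ext rfl
        rw [he, join_emL]
        simp only [emL_val]
        have := (σ (Fin.cast h1 i')).isLt
        omega
      rw [restrictL_apply _ _ hb]
      have he : emL (posMax_le (join hk σ τ)) i = emL hk (Fin.cast h1 i) := Fin.ext rfl
      rw [he, join_emL]
      rfl
    · intro j
      dsimp only
      have hcast : n - posMax (join hk σ τ) = n - k := by rw [h1]
      have hb : ∀ j' : Fin (n - posMax (join hk σ τ)),
          posMax (join hk σ τ) ≤ (((join hk σ τ) (emR (posMax_le _) j') : ℕ)) ∧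
            (((join hk σ τ) (emR (posMax_le _) j') : ℕ)) < n := by
        intro j'
        have he : emR (posMax_le (join hk σ τ)) j' = emR hk (Fin.cast hcast j') :=
          Fin.ext (by simp only [emR_val, Fin.coe_cast]; omega)
        rw [he, join_emR]
        simp only [vR_val]
        have := (τ (Fin.cast hcast j')).isLt
        omega
      rw [restrictR_apply _ _ hb]
      have he : emR (posMax_le (join hk σ τ)) j = emR hk (Fin.cast hcast j) :=
        Fin.ext (by simp only [emR_val, Fin.coe_cast]; omega)
      rw [he, join_emR]
      simp only [vR_val]
      omega
  · -- values agree
    intro π hπ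
    dsimp only
    rw [joinP_eq (posMax_le π), join_restrict (posMax_le π) π hπ rfl]

def cN (m : ℕ) : ℕ := (avoid231 m).card
def sD (m : ℕ) : ℕ := ∑ π ∈ avoid231 m, desSt π
def sA (m : ℕ) : ℕ := ∑ π ∈ avoid231 m, ascSt π
def sE (m : ℕ) : ℕ := ∑ π ∈ avoid231 m, eSt π
def sG (m : ℕ) : ℕ := ∑ π ∈ avoid231 m, gSt π
def s1 (m : ℕ) : ℕ := ∑ π ∈ avoid231 m, occ3d21 π
def s2 (m : ℕ) : ℕ := ∑ π ∈ avoid231 m, occ3d12 π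
def s3 (m : ℕ) : ℕ := ∑ π ∈ avoid231 m, occ32d1 π
def s4 (m : ℕ) : ℕ := ∑ π ∈ avoid231 m, occ31d2 π
def s5 (m : ℕ) : ℕ := ∑ π ∈ avoid231 m, occ13d2 π
def s6 (m : ℕ) : ℕ := ∑ π ∈ avoid231 m, occ1d32 π

lemma sum_sum_helper {α β : Type*} (s : Finset α) (t : Finset β) (f : α → ℕ) (g : β → ℕ)
    (c : ℕ) :
    (∑ a ∈ s, ∑ b ∈ t, (f a + g b + c)) =
      (∑ a ∈ s, f a) * t.card + s.card * (∑ b ∈ t, g b) + s.card * t.card * c := by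
  simp only [Finset.sum_add_distrib, Finset.sum_const, smul_eq_mul, ← Finset.mul_sum]
  ring

lemma cN_rec (n : ℕ) : cN (n+1) = ∑ k ∈ range (n+1), cN k * cN (n - k) := by
  have h : cN (n+1) = ∑ π ∈ avoid231 (n+1), (1:ℕ) := by
    simp [cN]
  rw [h, sum_decomp]
  refine Finset.sum_congr rfl fun k _ => ?_
  simp [Finset.sum_const, smul_eq_mul, cN]

lemma sD_rec (n : ℕ) : sD (n+1) = ∑ k ∈ range (n+1),
    (sD k * cN (n-k) + cN k * sD (n-k)
      + cN k * cN (n-k) * (if n - k = 0 then 0 else 1)) := by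
  rw [show sD (n+1) = ∑ π ∈ avoid231 (n+1), desSt π from rfl, sum_decomp]
  refine Finset.sum_congr rfl fun k hk' => ?_
  have hk : k ≤ n := Nat.lt_succ_iff.mp (Finset.mem_range.mp hk')
  rw [Finset.sum_congr rfl fun σ _ => Finset.sum_congr rfl fun τ _ => by
    rw [joinP_eq hk, desSt_join hk σ τ], sum_sum_helper]
  rfl

lemma sA_rec (n : ℕ) : sA (n+1) = ∑ k ∈ range (n+1),
    (sA k * cN (n-k) + cN k * sA (n-k)
      + cN k * cN (n-k) * (if k = 0 then 0 else 1)) := by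
  rw [show sA (n+1) = ∑ π ∈ avoid231 (n+1), ascSt π from rfl, sum_decomp]
  refine Finset.sum_congr rfl fun k hk' => ?_
  have hk : k ≤ n := Nat.lt_succ_iff.mp (Finset.mem_range.mp hk')
  rw [Finset.sum_congr rfl fun σ _ => Finset.sum_congr rfl fun τ _ => by
    rw [joinP_eq hk, ascSt_join hk σ τ], sum_sum_helper]
  rfl

lemma sE_rec (n : ℕ) : sE (n+1) = ∑ k ∈ range (n+1),
    (sE k * cN (n-k) + cN k * 0
      + cN k * cN (n-k) * ((n - k) * if k = 0 then 1 else 0)) := by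
  rw [show sE (n+1) = ∑ π ∈ avoid231 (n+1), eSt π from rfl, sum_decomp]
  refine Finset.sum_congr rfl fun k hk' => ?_
  have hk : k ≤ n := Nat.lt_succ_iff.mp (Finset.mem_range.mp hk')
  rw [Finset.sum_congr rfl fun σ _ => Finset.sum_congr rfl fun τ _ => show
    eSt (joinP n k σ τ) = eSt σ + 0 + ((n - k) * if k = 0 then 1 else 0) by
      rw [joinP_eq hk, eSt_join hk σ τ]; ring, sum_sum_helper]
  simp [sE, cN]

lemma sG_rec (n : ℕ) : sG (n+1) = ∑ k ∈ range (n+1),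
    (sG k * cN (n-k) + cN k * 0
      + cN k * cN (n-k) * ((if k = 0 then 0 else 1) + (if k = 0 then 0 else n - k))) := by
  rw [show sG (n+1) = ∑ π ∈ avoid231 (n+1), gSt π from rfl, sum_decomp]
  refine Finset.sum_congr rfl fun k hk' => ?_
  have hk : k ≤ n := Nat.lt_succ_iff.mp (Finset.mem_range.mp hk')
  rw [Finset.sum_congr rfl fun σ _ => Finset.sum_congr rfl fun τ _ => show
    gSt (joinP n k σ τ) = gSt σ + 0 +
      ((if k = 0 then 0 else 1) + (if k = 0 then 0 else n - k)) by
      rw [joinP_eq hk, gSt_join hk σ τ]; ring, sum_sum_helper]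
  simp [sG, cN]

lemma s1_rec (n : ℕ) : s1 (n+1) = ∑ k ∈ range (n+1),
    (s1 k * cN (n-k) + cN k * (s1 (n-k) + sD (n-k)) + cN k * cN (n-k) * 0) := by
  rw [show s1 (n+1) = ∑ π ∈ avoid231 (n+1), occ3d21 π from rfl, sum_decomp]
  refine Finset.sum_congr rfl fun k hk' => ?_
  have hk : k ≤ n := Nat.lt_succ_iff.mp (Finset.mem_range.mp hk')
  rw [Finset.sum_congr rfl fun σ _ => Finset.sum_congr rfl fun τ _ => show
    occ3d21 (joinP n k σ τ) = occ3d21 σ + (occ3d21 τ + desSt τ) + 0 by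
      rw [joinP_eq hk, occ3d21_join hk σ τ]; ring, sum_sum_helper]
  simp [s1, sD, cN, Finset.sum_add_distrib]

lemma s2_rec (n : ℕ) : s2 (n+1) = ∑ k ∈ range (n+1),
    (s2 k * cN (n-k) + cN k * (s2 (n-k) + sA (n-k)) + cN k * cN (n-k) * 0) := by
  rw [show s2 (n+1) = ∑ π ∈ avoid231 (n+1), occ3d12 π from rfl, sum_decomp]
  refine Finset.sum_congr rfl fun k hk' => ?_
  have hk : k ≤ n := Nat.lt_succ_iff.mp (Finset.mem_range.mp hk')
  rw [Finset.sum_congr rfl fun σ _ => Finset.sum_congr rfl fun τ _ => show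
    occ3d12 (joinP n k σ τ) = occ3d12 σ + (occ3d12 τ + ascSt τ) + 0 by
      rw [joinP_eq hk, occ3d12_join hk σ τ]; ring, sum_sum_helper]
  simp [s2, sA, cN, Finset.sum_add_distrib]

lemma s3_rec (n : ℕ) : s3 (n+1) = ∑ k ∈ range (n+1),
    (s3 k * cN (n-k) + cN k * (s3 (n-k) + sE (n-k)) + cN k * cN (n-k) * 0) := by
  rw [show s3 (n+1) = ∑ π ∈ avoid231 (n+1), occ32d1 π from rfl, sum_decomp]
  refine Finset.sum_congr rfl fun k hk' => ?_
  have hk : k ≤ n := Nat.lt_succ_iff.mp (Finset.mem_range.mp hk')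
  rw [Finset.sum_congr rfl fun σ _ => Finset.sum_congr rfl fun τ _ => show
    occ32d1 (joinP n k σ τ) = occ32d1 σ + (occ32d1 τ + eSt τ) + 0 by
      rw [joinP_eq hk, occ32d1_join hk σ τ]; ring, sum_sum_helper]
  simp [s3, sE, cN, Finset.sum_add_distrib]

lemma s4_rec (n : ℕ) : s4 (n+1) = ∑ k ∈ range (n+1),
    (s4 k * cN (n-k) + cN k * (s4 (n-k) + sG (n-k)) + cN k * cN (n-k) * 0) := by
  rw [show s4 (n+1) = ∑ π ∈ avoid231 (n+1), occ31d2 π from rfl, sum_decomp]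
  refine Finset.sum_congr rfl fun k hk' => ?_
  have hk : k ≤ n := Nat.lt_succ_iff.mp (Finset.mem_range.mp hk')
  rw [Finset.sum_congr rfl fun σ _ => Finset.sum_congr rfl fun τ _ => show
    occ31d2 (joinP n k σ τ) = occ31d2 σ + (occ31d2 τ + gSt τ) + 0 by
      rw [joinP_eq hk, occ31d2_join hk σ τ]; ring, sum_sum_helper]
  simp [s4, sG, cN, Finset.sum_add_distrib]

lemma s5_rec (n : ℕ) : s5 (n+1) = ∑ k ∈ range (n+1),
    (s5 k * cN (n-k) + cN k * s5 (n-k)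
      + cN k * cN (n-k) * (if k = 0 then 0 else n - k)) := by
  rw [show s5 (n+1) = ∑ π ∈ avoid231 (n+1), occ13d2 π from rfl, sum_decomp]
  refine Finset.sum_congr rfl fun k hk' => ?_
  have hk : k ≤ n := Nat.lt_succ_iff.mp (Finset.mem_range.mp hk')
  rw [Finset.sum_congr rfl fun σ _ => Finset.sum_congr rfl fun τ _ => by
    rw [joinP_eq hk, occ13d2_join hk σ τ], sum_sum_helper]
  rfl

lemma s6_rec (n : ℕ) : s6 (n+1) = ∑ k ∈ range (n+1),
    (s6 k * cN (n-k) + cN k * (s6 (n-k) + k * sD (n-k))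
      + cN k * cN (n-k) * (k * if n - k = 0 then 0 else 1)) := by
  rw [show s6 (n+1) = ∑ π ∈ avoid231 (n+1), occ1d32 π from rfl, sum_decomp]
  refine Finset.sum_congr rfl fun k hk' => ?_
  have hk : k ≤ n := Nat.lt_succ_iff.mp (Finset.mem_range.mp hk')
  rw [Finset.sum_congr rfl fun σ _ => Finset.sum_congr rfl fun τ _ => show
    occ1d32 (joinP n k σ τ) = occ1d32 σ + (occ1d32 τ + k * desSt τ)
      + (k * if n - k = 0 then 0 else 1) by
      rw [joinP_eq hk, occ1d32_join hk σ τ]; ring, sum_sum_helper]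
  simp [s6, sD, cN, Finset.sum_add_distrib, Finset.mul_sum]

lemma cN_zero : cN 0 = 1 := by
  rw [cN, avoid231, Finset.filter_true_of_mem (fun π _ i j l _ _ => i.elim0)]
  simp [Fintype.card_perm]

lemma cN_catalan (m : ℕ) : cN m = catalan m := by
  induction m using Nat.strong_induction_on with
  | _ m ih =>
    match m with
    | 0 => rw [cN_zero, catalan_zero]
    | (n+1) =>
      rw [cN_rec, catalan_succ']
      rw [Finset.Nat.sum_antidiagonal_eq_sum_range_succ_mk]
      exact Finset.sum_congr rfl fun k hk => by
        have hk' : k ≤ n := Nat.lt_succ_iff.mp (Finset.mem_range.mp hk)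
        rw [ih k (by omega), ih (n - k) (by omega)]

lemma sD_zero : sD 0 = 0 := by simp [sD, desSt]
lemma sA_zero : sA 0 = 0 := by simp [sA, ascSt]
lemma sE_zero : sE 0 = 0 := by simp [sE, eSt]
lemma sG_zero : sG 0 = 0 := by simp [sG, gSt]
lemma s1_zero : s1 0 = 0 := by simp [s1, occ3d21]
lemma s2_zero : s2 0 = 0 := by simp [s2, occ3d12]
lemma s3_zero : s3 0 = 0 := by simp [s3, occ32d1]
lemma s4_zero : s4 0 = 0 := by simp [s4, occ31d2]
lemma s5_zero : s5 0 = 0 := by simp [s5, occ13d2]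
lemma s6_zero : s6 0 = 0 := by simp [s6, occ1d32]

section Series
open PowerSeries

noncomputable def Xq : PowerSeries ℚ := PowerSeries.X

noncomputable def ser (u : ℕ → ℕ) : PowerSeries ℚ := PowerSeries.mk fun m => (u m : ℚ)

lemma coeff_ser (u : ℕ → ℕ) (m : ℕ) : (PowerSeries.coeff m) (ser u) = (u m : ℚ) :=
  PowerSeries.coeff_mk _ _

lemma coeff_Cq (m : ℕ) : (PowerSeries.coeff m) Cq = (catalan m : ℚ) := by
  unfold Cq; exact PowerSeries.coeff_mk _ _

lemma coeff_Bq (m : ℕ) : (PowerSeries.coeff m) Bq = ((Nat.choose (2*m) m : ℕ) : ℚ) := by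
  unfold Bq; exact PowerSeries.coeff_mk _ _

noncomputable def Mser : PowerSeries ℚ := PowerSeries.mk fun m => ((m * catalan m : ℕ) : ℚ)

lemma coeff_Mser (m : ℕ) : (PowerSeries.coeff m) Mser = ((m * catalan m : ℕ) : ℚ) :=
  PowerSeries.coeff_mk _ _

lemma coeff_mul_range (n : ℕ) (f g : PowerSeries ℚ) :
    (PowerSeries.coeff n) (f * g)
      = ∑ k ∈ range (n+1), (PowerSeries.coeff k) f * (PowerSeries.coeff (n-k)) g := by
  rw [PowerSeries.coeff_mul, Finset.Nat.sum_antidiagonal_eq_sum_range_succ_mk]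

lemma eq_X_mul {S R : PowerSeries ℚ} (h0 : (PowerSeries.coeff 0) S = 0)
    (h : ∀ n, (PowerSeries.coeff (n+1)) S = (PowerSeries.coeff n) R) :
    S = Xq * R := by
  ext m
  cases m with
  | zero =>
    rw [h0, PowerSeries.coeff_zero_eq_constantCoeff_apply, map_mul]
    simp [Xq]
  | succ n => rw [Xq, PowerSeries.coeff_succ_X_mul, h n]

lemma sum_reflect_mul (u v : ℕ → ℚ) (n : ℕ) :
    ∑ k ∈ range (n+1), u k * v (n-k) = ∑ k ∈ range (n+1), v k * u (n-k) := by
  rw [← Finset.sum_range_reflect]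
  refine Finset.sum_congr rfl fun k hk => ?_
  have hk' := Finset.mem_range.mp hk
  simp only [Nat.add_sub_cancel]
  rw [Nat.sub_sub_self (by omega)]
  ring

lemma sum_ite_last (f : ℕ → ℚ) (n : ℕ) :
    ∑ k ∈ range (n+1), f k * (if n - k = 0 then 0 else 1)
      = (∑ k ∈ range (n+1), f k) - f n := by
  have h : ∀ k ∈ range (n+1), f k * (if n - k = 0 then 0 else 1)
      = f k - (if k = n then f k else 0) := fun k hk => by
    have hk' := Finset.mem_range.mp hk
    by_cases h : k = n
    · subst h; simp
    · rw [if_neg h, if_neg (by omega), mul_one]; ring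
  rw [Finset.sum_congr rfl h, Finset.sum_sub_distrib,
    Finset.sum_ite_eq' (range (n+1)) n, if_pos (Finset.self_mem_range_succ n)]

lemma sum_ite_first (f : ℕ → ℚ) (n : ℕ) :
    ∑ k ∈ range (n+1), f k * (if k = 0 then 0 else 1)
      = (∑ k ∈ range (n+1), f k) - f 0 := by
  have h : ∀ k ∈ range (n+1), f k * (if k = 0 then 0 else 1)
      = f k - (if k = 0 then f k else 0) := fun k hk => by
    by_cases h : k = 0
    · subst h; simp
    · rw [if_neg h, if_neg h, mul_one]; ring
  rw [Finset.sum_congr rfl h, Finset.sum_sub_distrib,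
    Finset.sum_ite_eq' (range (n+1)) 0, if_pos (by simp)]

lemma hbc (j : ℕ) : ((Nat.choose (2*j) j : ℕ) : ℚ) = ((j : ℚ) + 1) * catalan j := by
  have h := succ_mul_catalan_eq_centralBinom j
  have h2 : Nat.centralBinom j = Nat.choose (2*j) j := rfl
  rw [h2] at h
  rw [← h]
  push_cast
  ring

lemma cast_catalan_succ (n : ℕ) : ((catalan (n+1) : ℕ) : ℚ)
    = ∑ k ∈ range (n+1), (catalan k : ℚ) * catalan (n-k) := by
  rw [catalan_succ', Finset.Nat.sum_antidiagonal_eq_sum_range_succ_mk]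
  push_cast
  rfl

lemma RC : Cq = 1 + Xq * (Cq * Cq) := by
  have h : Cq - 1 = Xq * (Cq * Cq) := by
    apply eq_X_mul
    · rw [map_sub, coeff_Cq]; simp
    · intro n
      rw [map_sub, coeff_Cq]
      have hc1 : (PowerSeries.coeff (n+1)) (1 : PowerSeries ℚ) = 0 := by simp
      rw [hc1, sub_zero, coeff_mul_range, cast_catalan_succ]
      simp only [coeff_Cq]
  linear_combination h

lemma central_rec (n : ℕ) : ((Nat.choose (2*(n+1)) (n+1) : ℕ) : ℚ)
    = 2 * ∑ k ∈ range (n+1), ((Nat.choose (2*k) k : ℕ) : ℚ) * catalan (n-k) := by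
  have h1 : ∑ k ∈ range (n+1), ((Nat.choose (2*k) k : ℕ) : ℚ) * catalan (n-k)
      = ∑ k ∈ range (n+1), ((k:ℚ)+1) * ((catalan k : ℚ) * catalan (n-k)) := by
    refine Finset.sum_congr rfl fun k _ => ?_
    rw [hbc k]; ring
  have h2 : ∑ k ∈ range (n+1), ((k:ℚ)+1) * ((catalan k : ℚ) * catalan (n-k))
      = ∑ k ∈ range (n+1), (((n-k : ℕ):ℚ)+1) * ((catalan (n-k) : ℚ) * catalan (n-(n-k))) := by
    rw [← Finset.sum_range_reflect]
    simp only [Nat.add_sub_cancel]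
  have h3 : 2 * ∑ k ∈ range (n+1), ((Nat.choose (2*k) k : ℕ) : ℚ) * catalan (n-k)
      = ∑ k ∈ range (n+1), ((n:ℚ)+2) * ((catalan k : ℚ) * catalan (n-k)) := by
    rw [two_mul]
    nth_rewrite 1 [h1, h2]
    rw [h1, ← Finset.sum_add_distrib]
    refine Finset.sum_congr rfl fun k hk => ?_
    have hk' := Finset.mem_range.mp hk
    rw [Nat.sub_sub_self (by omega), Nat.cast_sub (by omega)]
    ring
  rw [h3, ← Finset.mul_sum, ← cast_catalan_succ, hbc (n+1)]
  push_cast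
  ring

lemma RB : Bq = 1 + Xq * (Bq * Cq + Bq * Cq) := by
  have h : Bq - 1 = Xq * (Bq * Cq + Bq * Cq) := by
    apply eq_X_mul
    · rw [map_sub, coeff_Bq]; simp
    · intro n
      rw [map_sub, coeff_Bq]
      have hc1 : (PowerSeries.coeff (n+1)) (1 : PowerSeries ℚ) = 0 := by simp
      rw [hc1, sub_zero, map_add, coeff_mul_range, central_rec]
      simp only [coeff_Bq, coeff_Cq]
      ring
  linear_combination h

lemma RM : Mser = Bq - Cq := by
  ext m
  rw [coeff_Mser, map_sub, coeff_Bq, coeff_Cq, hbc m]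
  push_cast
  ring

end Series

section Series2
open PowerSeries

lemma sum_ite_only0 (f : ℕ → ℚ) (n : ℕ) :
    ∑ k ∈ range (n+1), f k * (if k = 0 then 1 else 0) = f 0 := by
  have h : ∀ k ∈ range (n+1), f k * (if k = 0 then 1 else 0)
      = (if k = 0 then f k else 0) := fun k _ => by
    by_cases h : k = 0 <;> simp [h]
  rw [Finset.sum_congr rfl h, Finset.sum_ite_eq' (range (n+1)) 0, if_pos (by simp)]

lemma coeff_one_q (n : ℕ) :
    (PowerSeries.coeff (n+1)) (1 : PowerSeries ℚ) = 0 := by simp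

lemma RD : ser sD = Xq * (ser sD * Cq + ser sD * Cq + (Cq * Cq - Cq)) := by
  apply eq_X_mul
  · rw [coeff_ser, sD_zero]; norm_num
  · intro n
    rw [coeff_ser, sD_rec n]
    simp only [map_add, map_sub, coeff_mul_range]
    simp only [coeff_ser, coeff_Cq, cN_catalan]
    push_cast [Nat.cast_ite]
    try rw [Finset.sum_add_distrib, Finset.sum_add_distrib,
      sum_reflect_mul (fun k => (catalan k : ℚ)) (fun k => (sD k : ℚ)) n,
      sum_ite_last (fun k => (catalan k : ℚ) * (catalan (n-k) : ℚ)) n]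
    simp only [Nat.sub_self, catalan_zero, Nat.cast_one, mul_one]
    try ring

lemma RA : ser sA = Xq * (ser sA * Cq + ser sA * Cq + (Cq * Cq - Cq)) := by
  apply eq_X_mul
  · rw [coeff_ser, sA_zero]; norm_num
  · intro n
    rw [coeff_ser, sA_rec n]
    simp only [map_add, map_sub, coeff_mul_range]
    simp only [coeff_ser, coeff_Cq, cN_catalan]
    push_cast [Nat.cast_ite]
    try rw [Finset.sum_add_distrib, Finset.sum_add_distrib,
      sum_reflect_mul (fun k => (catalan k : ℚ)) (fun k => (sA k : ℚ)) n,
      sum_ite_first (fun k => (catalan k : ℚ) * (catalan (n-k) : ℚ)) n]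
    simp only [Nat.sub_zero, catalan_zero, Nat.cast_one, one_mul]
    try ring

lemma RE : ser sE = Xq * (ser sE * Cq + Mser) := by
  apply eq_X_mul
  · rw [coeff_ser, sE_zero]; norm_num
  · intro n
    rw [coeff_ser, sE_rec n]
    simp only [map_add, coeff_mul_range, coeff_Mser]
    simp only [coeff_ser, coeff_Cq, cN_catalan]
    push_cast [Nat.cast_ite]
    try rw [Finset.sum_add_distrib, Finset.sum_add_distrib]
    have h : ∀ k ∈ range (n+1), (catalan k : ℚ) * (catalan (n-k) : ℚ)
        * (((n - k : ℕ) : ℚ) * if k = 0 then 1 else 0)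
        = ((catalan k : ℚ) * (catalan (n-k) : ℚ) * ((n - k : ℕ) : ℚ))
          * (if k = 0 then 1 else 0) := fun k _ => by ring
    rw [Finset.sum_congr rfl h,
      sum_ite_only0 (fun k => (catalan k : ℚ) * (catalan (n-k) : ℚ) * ((n - k : ℕ) : ℚ)) n]
    simp only [Nat.sub_zero, catalan_zero, Nat.cast_one, one_mul, mul_zero,
      Finset.sum_const_zero, add_zero, zero_add]
    try ring

lemma RG : ser sG = Xq * (ser sG * Cq + (Cq * Cq - Cq + (Cq * Mser - Mser))) := by
  apply eq_X_mul
  · rw [coeff_ser, sG_zero]; norm_num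
  · intro n
    rw [coeff_ser, sG_rec n]
    simp only [map_add, map_sub, coeff_mul_range, coeff_Mser, coeff_Cq]
    simp only [coeff_ser, coeff_Cq, coeff_Mser, cN_catalan]
    push_cast [Nat.cast_ite]
    try rw [Finset.sum_add_distrib, Finset.sum_add_distrib]
    have h1 : ∀ k ∈ range (n+1), (catalan k : ℚ) * (catalan (n-k) : ℚ)
        * ((if k = 0 then (0:ℚ) else 1) + (if k = 0 then (0:ℚ) else ((n-k : ℕ):ℚ)))
        = ((catalan k : ℚ) * (catalan (n-k) : ℚ)) * (if k = 0 then 0 else 1)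
          + ((catalan k : ℚ) * (((n-k : ℕ):ℚ) * (catalan (n-k) : ℚ)))
            * (if k = 0 then 0 else 1) := fun k _ => by
      by_cases h : k = 0 <;> simp [h] <;> ring
    rw [Finset.sum_congr rfl h1, Finset.sum_add_distrib,
      sum_ite_first (fun k => (catalan k : ℚ) * (catalan (n-k) : ℚ)) n,
      sum_ite_first (fun k => (catalan k : ℚ) * (((n-k : ℕ):ℚ) * (catalan (n-k) : ℚ))) n]
    simp only [Nat.sub_zero, catalan_zero, Nat.cast_one, one_mul, mul_zero,
      Finset.sum_const_zero, add_zero]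
    try ring

lemma R1 : ser s1 = Xq * (ser s1 * Cq + Cq * (ser s1 + ser sD)) := by
  apply eq_X_mul
  · rw [coeff_ser, s1_zero]; norm_num
  · intro n
    rw [coeff_ser, s1_rec n]
    simp only [map_add, coeff_mul_range]
    simp only [map_add, coeff_ser, coeff_Cq, cN_catalan]
    push_cast
    try rw [Finset.sum_add_distrib, Finset.sum_add_distrib]
    try simp only [mul_zero, Finset.sum_const_zero, add_zero]
    try ring

lemma R2 : ser s2 = Xq * (ser s2 * Cq + Cq * (ser s2 + ser sA)) := by
  apply eq_X_mul
  · rw [coeff_ser, s2_zero]; norm_num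
  · intro n
    rw [coeff_ser, s2_rec n]
    simp only [map_add, coeff_mul_range]
    simp only [map_add, coeff_ser, coeff_Cq, cN_catalan]
    push_cast
    try rw [Finset.sum_add_distrib, Finset.sum_add_distrib]
    try simp only [mul_zero, Finset.sum_const_zero, add_zero]
    try ring

lemma R3 : ser s3 = Xq * (ser s3 * Cq + Cq * (ser s3 + ser sE)) := by
  apply eq_X_mul
  · rw [coeff_ser, s3_zero]; norm_num
  · intro n
    rw [coeff_ser, s3_rec n]
    simp only [map_add, coeff_mul_range]
    simp only [map_add, coeff_ser, coeff_Cq, cN_catalan]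
    push_cast
    try rw [Finset.sum_add_distrib, Finset.sum_add_distrib]
    try simp only [mul_zero, Finset.sum_const_zero, add_zero]
    try ring

lemma R4 : ser s4 = Xq * (ser s4 * Cq + Cq * (ser s4 + ser sG)) := by
  apply eq_X_mul
  · rw [coeff_ser, s4_zero]; norm_num
  · intro n
    rw [coeff_ser, s4_rec n]
    simp only [map_add, coeff_mul_range]
    simp only [map_add, coeff_ser, coeff_Cq, cN_catalan]
    push_cast
    try rw [Finset.sum_add_distrib, Finset.sum_add_distrib]
    try simp only [mul_zero, Finset.sum_const_zero, add_zero]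
    try ring

lemma R5 : ser s5 = Xq * (ser s5 * Cq + Cq * ser s5 + (Cq * Mser - Mser)) := by
  apply eq_X_mul
  · rw [coeff_ser, s5_zero]; norm_num
  · intro n
    rw [coeff_ser, s5_rec n]
    simp only [map_add, map_sub, coeff_mul_range, coeff_Mser]
    simp only [coeff_ser, coeff_Cq, coeff_Mser, cN_catalan]
    push_cast [Nat.cast_ite]
    try rw [Finset.sum_add_distrib, Finset.sum_add_distrib,
      sum_reflect_mul (fun k => (catalan k : ℚ)) (fun k => (s5 k : ℚ)) n]
    have h1 : ∀ k ∈ range (n+1), (catalan k : ℚ) * (catalan (n-k) : ℚ)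
        * (if k = 0 then (0:ℚ) else ((n-k : ℕ):ℚ))
        = ((catalan k : ℚ) * (((n-k : ℕ):ℚ) * (catalan (n-k) : ℚ)))
          * (if k = 0 then 0 else 1) := fun k _ => by
      by_cases h : k = 0 <;> simp [h] <;> ring
    rw [Finset.sum_congr rfl h1,
      sum_ite_first (fun k => (catalan k : ℚ) * (((n-k : ℕ):ℚ) * (catalan (n-k) : ℚ))) n]
    simp only [Nat.sub_zero, catalan_zero, Nat.cast_one, one_mul]
    try ring

lemma R6 : ser s6 = Xq * (ser s6 * Cq + Cq * ser s6
    + (Mser * ser sD + (Mser * Cq - Mser))) := by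
  apply eq_X_mul
  · rw [coeff_ser, s6_zero]; norm_num
  · intro n
    rw [coeff_ser, s6_rec n]
    simp only [map_add, map_sub, coeff_mul_range, coeff_Mser]
    simp only [coeff_ser, coeff_Cq, coeff_Mser, cN_catalan]
    push_cast [Nat.cast_ite]
    try rw [Finset.sum_add_distrib, Finset.sum_add_distrib,
      sum_reflect_mul (fun k => (catalan k : ℚ)) (fun k => (s6 k : ℚ)) n]
    have h1 : ∀ k ∈ range (n+1), (catalan k : ℚ) * (catalan (n-k) : ℚ)
        * ((k:ℚ) * if n - k = 0 then (0:ℚ) else 1)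
        = (((k:ℚ) * (catalan k : ℚ)) * (catalan (n-k) : ℚ))
          * (if n - k = 0 then 0 else 1) := fun k _ => by ring
    rw [Finset.sum_congr rfl h1,
      sum_ite_last (fun k => ((k:ℚ) * (catalan k : ℚ)) * (catalan (n-k) : ℚ)) n]
    have h2 : ∀ k ∈ range (n+1), (catalan k : ℚ)
        * ((s6 (n-k) : ℚ) + ((k:ℚ) * (sD (n-k) : ℚ)))
        = (catalan k : ℚ) * (s6 (n-k) : ℚ)
          + ((k:ℚ) * (catalan k : ℚ)) * (sD (n-k) : ℚ) := fun k _ => by ring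
    simp only [Nat.sub_self, catalan_zero, Nat.cast_one, mul_one]
    rw [Finset.sum_congr rfl h2, Finset.sum_add_distrib,
      sum_reflect_mul (fun k => (catalan k : ℚ)) (fun k => (s6 k : ℚ)) n]
    try ring

end Series2

section Algebra
open PowerSeries

lemma hCu : (1 - Xq * Cq) * Cq = 1 := by linear_combination RC

lemma hBu : (1 - 2 * Xq * Cq) * Bq = 1 := by linear_combination RB

lemma hne2XC : (1 - 2 * Xq * Cq : PowerSeries ℚ) ≠ 0 := by
  intro h
  have h2 := congrArg (PowerSeries.constantCoeff) h
  simp [Xq] at h2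

lemma hB2C : Bq * (2 - Cq) = Cq := by
  have hz : (1 - 2 * Xq * Cq) * (Bq * (2 - Cq) - Cq) = 0 := by
    linear_combination (2 - Cq) * hBu - 2 * RC
  rcases mul_eq_zero.mp hz with h | h
  · exact absurd h hne2XC
  · linear_combination h

lemma hBC : Bq - Cq = Xq * (Bq * (Cq * Cq)) := by
  linear_combination RB - RC + Xq * Cq * hB2C

lemma solveC {S R : PowerSeries ℚ} (h : S = Xq * (S * Cq + R)) : S = Xq * R * Cq := by
  have h2 : S * (1 - Xq * Cq) = Xq * R := by linear_combination h
  calc S = S * ((1 - Xq * Cq) * Cq) := by rw [hCu, mul_one]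
    _ = (S * (1 - Xq * Cq)) * Cq := by ring
    _ = Xq * R * Cq := by rw [h2]

lemma solveB {S R : PowerSeries ℚ} (h : S = Xq * (S * Cq + Cq * S + R)) :
    S = Xq * R * Bq := by
  have h2 : S * (1 - 2 * Xq * Cq) = Xq * R := by linear_combination h
  calc S = S * ((1 - 2 * Xq * Cq) * Bq) := by rw [hBu, mul_one]
    _ = (S * (1 - 2 * Xq * Cq)) * Bq := by ring
    _ = Xq * R * Bq := by rw [h2]

lemma DD : ser sD = Xq^2 * Bq * Cq^3 := by
  have h := solveB (show ser sD = Xq * (ser sD * Cq + Cq * ser sD + (Cq * Cq - Cq)) by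
    linear_combination RD)
  linear_combination h + Xq * Bq * Cq * RC

lemma AA : ser sA = Xq^2 * Bq * Cq^3 := by
  have h := solveB (show ser sA = Xq * (ser sA * Cq + Cq * ser sA + (Cq * Cq - Cq)) by
    linear_combination RA)
  linear_combination h + Xq * Bq * Cq * RC

lemma EE : ser sE = Xq * (Bq - Cq) * Cq := by
  have h := solveC RE
  rw [RM] at h
  exact h

lemma GG : ser sG = Xq * (Cq - 1) * Bq * Cq := by
  have h := solveC RG
  rw [RM] at h
  linear_combination h

lemma T1 : ser s1 = Xq^3 * Bq^2 * Cq^4 := by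
  have h := solveB (show ser s1 = Xq * (ser s1 * Cq + Cq * ser s1 + Cq * ser sD) by
    linear_combination R1)
  rw [DD] at h
  rw [h]; ring

lemma T2 : ser s2 = Xq^3 * Bq^2 * Cq^4 := by
  have h := solveB (show ser s2 = Xq * (ser s2 * Cq + Cq * ser s2 + Cq * ser sA) by
    linear_combination R2)
  rw [AA] at h
  rw [h]; ring

lemma T3 : ser s3 = Xq^3 * Bq^2 * Cq^4 := by
  have h := solveB (show ser s3 = Xq * (ser s3 * Cq + Cq * ser s3 + Cq * ser sE) by
    linear_combination R3)
  rw [EE] at h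
  rw [h]
  linear_combination Xq^2 * Cq^2 * Bq * hBC

lemma T4 : ser s4 = Xq^3 * Bq^2 * Cq^4 := by
  have h := solveB (show ser s4 = Xq * (ser s4 * Cq + Cq * ser s4 + Cq * ser sG) by
    linear_combination R4)
  rw [GG] at h
  rw [h]
  linear_combination Xq^2 * Bq^2 * Cq^2 * RC

lemma T5 : ser s5 = Xq^3 * Bq^2 * Cq^4 := by
  have h := solveB (show ser s5 = Xq * (ser s5 * Cq + Cq * ser s5 + (Cq * Mser - Mser)) by
    linear_combination R5)
  rw [RM] at h
  rw [h]
  linear_combination Xq * Bq * (Bq - Cq) * RC + Xq^2 * Bq * Cq^2 * hBC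

lemma T6 : ser s6 = Xq^3 * Bq^3 * Cq^3 := by
  have h := solveB (show ser s6 = Xq * (ser s6 * Cq + Cq * ser s6
      + (Mser * ser sD + (Mser * Cq - Mser))) by linear_combination R6)
  rw [RM, DD] at h
  have h2ne : (2 : PowerSeries ℚ) ≠ 0 := by
    intro hh
    have := congrArg (PowerSeries.constantCoeff) hh
    rw [map_ofNat] at this
    norm_num at this
  refine mul_left_cancel₀ h2ne ?_
  rw [h]
  linear_combination 2 * Xq * Bq * (Bq - Cq) * RC - Xq^2 * Bq * Cq^2 * (Bq - Cq) * RB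
    + Xq^2 * Bq * Cq^2 * (Bq + 1) * hBC - Xq^3 * Bq^2 * Cq^3 * hB2C

end Algebra

end Vinc

/-- Over 2-3-1-avoiding permutations, the generating functions of the total numbers of
occurrences of 3-21, 3-12, 32-1, 31-2 and 13-2 are all `z³B²C⁴`, and that of 1-32 is
`z³B³C³`. -/
theorem gf_vincular_patterns_on_avoid231 :
    PowerSeries.mk (fun n => ((∑ π ∈ avoid231 n, occ3d21 π : ℕ) : ℚ)) =
      PowerSeries.X ^ 3 * Bq ^ 2 * Cq ^ 4 ∧
    PowerSeries.mk (fun n => ((∑ π ∈ avoid231 n, occ3d12 π : ℕ) : ℚ)) =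
      PowerSeries.X ^ 3 * Bq ^ 2 * Cq ^ 4 ∧
    PowerSeries.mk (fun n => ((∑ π ∈ avoid231 n, occ32d1 π : ℕ) : ℚ)) =
      PowerSeries.X ^ 3 * Bq ^ 2 * Cq ^ 4 ∧
    PowerSeries.mk (fun n => ((∑ π ∈ avoid231 n, occ31d2 π : ℕ) : ℚ)) =
      PowerSeries.X ^ 3 * Bq ^ 2 * Cq ^ 4 ∧
    PowerSeries.mk (fun n => ((∑ π ∈ avoid231 n, occ13d2 π : ℕ) : ℚ)) =
      PowerSeries.X ^ 3 * Bq ^ 2 * Cq ^ 4 ∧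
    PowerSeries.mk (fun n => ((∑ π ∈ avoid231 n, occ1d32 π : ℕ) : ℚ)) =
      PowerSeries.X ^ 3 * Bq ^ 3 * Cq ^ 3 :=
  ⟨Vinc.T1, Vinc.T2, Vinc.T3, Vinc.T4, Vinc.T5, Vinc.T6⟩
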